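/- Let n ≥ 1, d ≥ 1, β ∈ (0,1), Δ > 0, σ > 0, and let G : [0,∞) → [0,1] be decreasing with 0 < G(Δ/(32σ)) < 1. Let z : {1,…,n} → {1,2} with clusters T_i* = {j : z_j = i} of sizes n_i*, let θ₁, θ₂ ∈ ℝ^d, and let Y_j = θ_{z_j} + w_j where w₁, …, w_n are independent ℝ^d-valued random vectors with P[‖w_j‖ > x] ≤ G(x/σ) for all x ≥ 0. Let D₁ ≥ 0 satisfy P[‖w_j‖ > D₁] ≤ exp(−5/(4β²)) for each j. Then with probability at least 1 − 4·exp(−min(n₁*, n₂*)/4), the following hold simultaneously for i = 1, 2: (i) |{j ∈ T_i* : ‖Y_j − θ_i‖ ≤ D₁}| ≥ n_i*(1 − β²), and (ii) |{j ∈ T_i* : ‖Y_j − θ_i‖ ≤ Δ/32}| ≥ n_i*·(1 − 5/(4·log(1/G(Δ/(32σ))))). -/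

import Mathlib

open MeasureTheory ProbabilityTheory Filter Finset


lemma chernoff_helper {Ω : Type*} [MeasureSpace Ω] [IsProbabilityMeasure (ℙ : Measure Ω)]
    {n : ℕ} (X : Fin n → Ω → ℝ) (hXm : ∀ j, Measurable (X j))
    (hind : iIndepFun X ℙ)
    (h01 : ∀ j ω, X j ω = 0 ∨ X j ω = 1)
    (t p : ℝ) (ht : 0 ≤ t) (hp : 0 ≤ p) (hpt : p * Real.exp t ≤ 1)
    (hEX : ∀ j, (∫ ω, X j ω) ≤ p)
    (s : Finset (Fin n)) (a : ℝ) :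
    (ℙ {ω | a ≤ ∑ j ∈ s, X j ω}).toReal ≤ Real.exp (-(t * a) + s.card) := by
  have hX01 : ∀ j ω, 0 ≤ X j ω ∧ X j ω ≤ 1 := by
    intro j ω; rcases h01 j ω with h | h <;> simp [h]
  have hXint : ∀ j, Integrable (X j) ℙ := by
    intro j
    refine (integrable_const (1:ℝ)).mono' (hXm j).aestronglyMeasurable ?_
    filter_upwards with ω
    rw [Real.norm_eq_abs, abs_le]
    exact ⟨by linarith [(hX01 j ω).1], (hX01 j ω).2⟩
  have hmgf : ∀ j, mgf (X j) ℙ t ≤ Real.exp 1 := by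
    intro j
    have hpt' : ∀ ω, Real.exp (t * X j ω) = 1 + (Real.exp t - 1) * X j ω := by
      intro ω; rcases h01 j ω with h | h <;> simp [h]
    have : mgf (X j) ℙ t = 1 + (Real.exp t - 1) * ∫ ω, X j ω := by
      rw [mgf]
      simp_rw [hpt']
      rw [integral_add (integrable_const 1) ((hXint j).const_mul _),
        integral_const, integral_const_mul]
      simp
    rw [this]
    have h1 : (Real.exp t - 1) * ∫ ω, X j ω ≤ (Real.exp t - 1) * p :=
      mul_le_mul_of_nonneg_left (hEX j) (by nlinarith [Real.one_le_exp ht])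
    have h2 : (Real.exp t - 1) * p ≤ 1 := by nlinarith [Real.exp_pos t]
    calc 1 + (Real.exp t - 1) * ∫ ω, X j ω ≤ 1 + (Real.exp t - 1) * p := by linarith
      _ ≤ Real.exp ((Real.exp t - 1) * p) := by
            have := Real.add_one_le_exp ((Real.exp t - 1) * p); linarith
      _ ≤ Real.exp 1 := Real.exp_le_exp.mpr h2
  have hSmeas : Measurable (fun ω => ∑ j ∈ s, X j ω) := by
    exact Finset.measurable_sum s fun j _ => hXm j
  have hintS : Integrable (fun ω => Real.exp (t * ∑ j ∈ s, X j ω)) ℙ := by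
    refine (integrable_const (Real.exp (t * s.card))).mono'
      ((hSmeas.const_mul t).exp).aestronglyMeasurable ?_
    filter_upwards with ω
    rw [Real.norm_eq_abs, abs_of_pos (Real.exp_pos _), Real.exp_le_exp]
    refine mul_le_mul_of_nonneg_left ?_ ht
    calc ∑ j ∈ s, X j ω ≤ ∑ j ∈ s, 1 := Finset.sum_le_sum fun j _ => (hX01 j ω).2
      _ = s.card := by simp
  have key := measure_ge_le_exp_mul_mgf (X := ∑ j ∈ s, X j) (μ := ℙ) a ht ?_
  · have hset : {ω | a ≤ (∑ j ∈ s, X j) ω} = {ω | a ≤ ∑ j ∈ s, X j ω} := by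
      simp [Finset.sum_apply]
    rw [hset] at key
    refine key.trans ?_
    have hprod : mgf (∑ j ∈ s, X j) ℙ t ≤ Real.exp 1 ^ s.card := by
      rw [hind.mgf_sum hXm s]
      calc ∏ j ∈ s, mgf (X j) ℙ t ≤ ∏ j ∈ s, Real.exp 1 :=
            Finset.prod_le_prod (fun j _ => mgf_nonneg) (fun j _ => hmgf j)
        _ = Real.exp 1 ^ s.card := by rw [Finset.prod_const]
    calc Real.exp (-t * a) * mgf (∑ j ∈ s, X j) ℙ t
        ≤ Real.exp (-t * a) * Real.exp 1 ^ s.card := by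
          exact mul_le_mul_of_nonneg_left hprod (Real.exp_pos _).le
      _ = Real.exp (-(t * a) + s.card) := by
          rw [← Real.exp_nat_mul, ← Real.exp_add]; ring_nf
  · simpa [Finset.sum_apply] using hintS

/-- Concentration event for the two-cluster initialization analysis (Lemma
`E-conc-init-2` of the paper): with probability at least
`1 − 4·exp(−min(n₁*, n₂*)/4)`, for each cluster `i = 1, 2`, at least
`n_i*(1 − β²)` points of the cluster lie within distance `D₁` of `θ_i`, and at
least `n_i*(1 − 5/(4 log(1/G(Δ/(32σ)))))` of them lie within `Δ/32` of `θ_i`. -/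
theorem two_cluster_initialization_concentration
    (n d : ℕ) (hn : 1 ≤ n) (hd : 1 ≤ d)
    (β Δ σ : ℝ) (hβ : β ∈ Set.Ioo (0 : ℝ) 1) (hΔ : 0 < Δ) (hσ : 0 < σ)
    (G : ℝ → ℝ) (hGanti : AntitoneOn G (Set.Ici 0))
    (hGrange : ∀ x : ℝ, 0 ≤ x → G x ∈ Set.Icc (0 : ℝ) 1)
    (hGpos : 0 < G (Δ / (32 * σ))) (hGlt : G (Δ / (32 * σ)) < 1)
    (z : Fin n → Fin 2) (θ : Fin 2 → EuclideanSpace ℝ (Fin d))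
    (Ω : Type*) [MeasureSpace Ω] [IsProbabilityMeasure (ℙ : Measure Ω)]
    (w : Fin n → Ω → EuclideanSpace ℝ (Fin d))
    (hmeas : ∀ j, Measurable (w j))
    (hindep : iIndepFun w ℙ)
    (htail : ∀ j, ∀ x : ℝ, 0 ≤ x → (ℙ {ω | x < ‖w j ω‖}).toReal ≤ G (x / σ))
    (D₁ : ℝ) (hD₁ : 0 ≤ D₁)
    (hD₁tail : ∀ j, (ℙ {ω | D₁ < ‖w j ω‖}).toReal ≤ Real.exp (-(5 / (4 * β ^ 2)))) :
    1 - 4 * Real.exp (-((min ((Finset.univ.filter (fun j => z j = 0)).card)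
            ((Finset.univ.filter (fun j => z j = 1)).card) : ℕ) : ℝ) / 4)
      ≤ (ℙ {ω | ∀ i : Fin 2,
            (((Finset.univ.filter (fun j => z j = i)).card : ℝ) * (1 - β ^ 2)
              ≤ (((Finset.univ.filter (fun j => z j = i)).filter
                  (fun j => ‖(θ (z j) + w j ω) - θ i‖ ≤ D₁)).card : ℝ)) ∧
            (((Finset.univ.filter (fun j => z j = i)).card : ℝ)
                * (1 - 5 / (4 * Real.log (1 / G (Δ / (32 * σ)))))
              ≤ (((Finset.univ.filter (fun j => z j = i)).filter
                  (fun j => ‖(θ (z j) + w j ω) - θ i‖ ≤ Δ / 32)).card : ℝ))}).toReal := by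
  classical
  obtain ⟨hβ0, hβ1⟩ := hβ
  set L : ℝ := Real.log (1 / G (Δ / (32 * σ))) with hLdef
  have hL : 0 < L := Real.log_pos (one_lt_one_div hGpos hGlt)
  set m : ℕ := min ((Finset.univ.filter (fun j => z j = 0)).card)
      ((Finset.univ.filter (fun j => z j = 1)).card) with hmdef
  have hmle : ∀ i : Fin 2, m ≤ ((Finset.univ.filter (fun j => z j = i)).card) := by
    intro i; fin_cases i
    exacts [min_le_left _ _, min_le_right _ _]
  -- measurability of indicator variables
  have hXm : ∀ (c : ℝ) (j : Fin n),
      Measurable (fun ω => if c < ‖w j ω‖ then (1:ℝ) else 0) := fun c j =>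
    Measurable.ite (measurableSet_lt measurable_const (hmeas j).norm)
      measurable_const measurable_const
  have hXind : ∀ c : ℝ, iIndepFun
      (fun (j : Fin n) (ω : Ω) => if c < ‖w j ω‖ then (1:ℝ) else 0) ℙ := by
    intro c
    exact hindep.comp (fun j (v : EuclideanSpace ℝ (Fin d)) => if c < ‖v‖ then (1:ℝ) else 0)
      (fun j => Measurable.ite (measurableSet_lt measurable_const measurable_norm)
        measurable_const measurable_const)
  have hXint : ∀ (c : ℝ) (j : Fin n),
      (∫ ω, (if c < ‖w j ω‖ then (1:ℝ) else 0)) = (ℙ {ω | c < ‖w j ω‖}).toReal := by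
    intro c j
    have h : (fun ω => if c < ‖w j ω‖ then (1:ℝ) else 0)
        = Set.indicator {ω | c < ‖w j ω‖} (fun _ => 1) := by
      ext ω; simp [Set.indicator_apply, Set.mem_setOf_eq]
    rw [h, integral_indicator_const _ (measurableSet_lt measurable_const (hmeas j).norm)]
    simp
    rw [measureReal_def]
  -- generic Chernoff bound
  have key : ∀ (c t p : ℝ), 0 ≤ t → 0 ≤ p → p * Real.exp t ≤ 1 →
      (∀ j, (ℙ {ω | c < ‖w j ω‖}).toReal ≤ p) → ∀ (s : Finset (Fin n)) (a : ℝ),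
      (ℙ {ω | a ≤ ∑ j ∈ s, (if c < ‖w j ω‖ then (1:ℝ) else 0)}).toReal
        ≤ Real.exp (-(t * a) + s.card) := by
    intro c t p ht hp hpt htails s a
    refine chernoff_helper _ (hXm c) (hXind c)
      (fun j ω => by by_cases h : c < ‖w j ω‖ <;> simp [h]) t p ht hp hpt ?_ s a
    intro j; rw [hXint c j]; exact htails j
  -- the four bad events
  set F1 : Fin 2 → Set Ω := fun i =>
    {ω | ((Finset.univ.filter (fun j => z j = i)).card : ℝ) * β ^ 2
      ≤ ∑ j ∈ Finset.univ.filter (fun j => z j = i),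
          (if D₁ < ‖w j ω‖ then (1:ℝ) else 0)} with hF1def
  set F2 : Fin 2 → Set Ω := fun i =>
    {ω | ((Finset.univ.filter (fun j => z j = i)).card : ℝ) * (5 / (4 * L))
      ≤ ∑ j ∈ Finset.univ.filter (fun j => z j = i),
          (if Δ / 32 < ‖w j ω‖ then (1:ℝ) else 0)} with hF2def
  have hF1meas : ∀ i, MeasurableSet (F1 i) := fun i =>
    measurableSet_le measurable_const (Finset.measurable_sum _ fun j _ => hXm D₁ j)
  have hF2meas : ∀ i, MeasurableSet (F2 i) := fun i =>
    measurableSet_le measurable_const (Finset.measurable_sum _ fun j _ => hXm (Δ/32) j)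
  have hF1 : ∀ i, (ℙ (F1 i)).toReal ≤ Real.exp (-(m : ℝ) / 4) := by
    intro i
    have hb := key D₁ (5 / (4 * β ^ 2)) (Real.exp (-(5 / (4 * β ^ 2)))) (by positivity)
      (Real.exp_pos _).le (le_of_eq (by rw [← Real.exp_add]; simp)) hD₁tail
      (Finset.univ.filter (fun j => z j = i))
      (((Finset.univ.filter (fun j => z j = i)).card : ℝ) * β ^ 2)
    refine hb.trans ?_
    rw [Real.exp_le_exp]
    have h1 : -(5 / (4 * β ^ 2) * (((Finset.univ.filter (fun j => z j = i)).card : ℝ) * β ^ 2))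
        + ((Finset.univ.filter (fun j => z j = i)).card : ℝ)
        = -(((Finset.univ.filter (fun j => z j = i)).card : ℝ) / 4) := by
      field_simp; ring
    rw [h1]
    have h2 : (m : ℝ) ≤ ((Finset.univ.filter (fun j => z j = i)).card : ℝ) := by
      exact_mod_cast hmle i
    linarith
  have hF2 : ∀ i, (ℙ (F2 i)).toReal ≤ Real.exp (-(m : ℝ) / 4) := by
    intro i
    have htails : ∀ j, (ℙ {ω | Δ / 32 < ‖w j ω‖}).toReal ≤ G (Δ / (32 * σ)) := by
      intro j
      have := htail j (Δ / 32) (by positivity)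
      rwa [div_div] at this
    have hpt : G (Δ / (32 * σ)) * Real.exp L ≤ 1 := by
      rw [hLdef, Real.exp_log (by positivity)]
      rw [mul_one_div, div_self hGpos.ne']
    have hb := key (Δ / 32) L (G (Δ / (32 * σ))) hL.le hGpos.le hpt htails
      (Finset.univ.filter (fun j => z j = i))
      (((Finset.univ.filter (fun j => z j = i)).card : ℝ) * (5 / (4 * L)))
    refine hb.trans ?_
    rw [Real.exp_le_exp]
    have h1 : -(L * (((Finset.univ.filter (fun j => z j = i)).card : ℝ) * (5 / (4 * L))))
        + ((Finset.univ.filter (fun j => z j = i)).card : ℝ)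
        = -(((Finset.univ.filter (fun j => z j = i)).card : ℝ) / 4) := by
      field_simp; ring
    rw [h1]
    have h2 : (m : ℝ) ≤ ((Finset.univ.filter (fun j => z j = i)).card : ℝ) := by
      exact_mod_cast hmle i
    linarith
  -- union bound
  set U : Set Ω := (F1 0 ∪ F2 0) ∪ (F1 1 ∪ F2 1) with hUdef
  have hUmeas : MeasurableSet U :=
    (((hF1meas 0).union (hF2meas 0)).union ((hF1meas 1).union (hF2meas 1)))
  have hUb : (ℙ U).toReal ≤ 4 * Real.exp (-(m : ℝ) / 4) := by
    have hle : ℙ U ≤ (ℙ (F1 0) + ℙ (F2 0)) + (ℙ (F1 1) + ℙ (F2 1)) :=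
      (measure_union_le _ _).trans (add_le_add (measure_union_le _ _) (measure_union_le _ _))
    have hne1 : ℙ (F1 0) + ℙ (F2 0) ≠ ⊤ :=
      ENNReal.add_ne_top.mpr ⟨measure_ne_top _ _, measure_ne_top _ _⟩
    have hne2 : ℙ (F1 1) + ℙ (F2 1) ≠ ⊤ :=
      ENNReal.add_ne_top.mpr ⟨measure_ne_top _ _, measure_ne_top _ _⟩
    have := ENNReal.toReal_mono (ENNReal.add_ne_top.mpr ⟨hne1, hne2⟩) hle
    rw [ENNReal.toReal_add hne1 hne2, ENNReal.toReal_add (measure_ne_top _ _) (measure_ne_top _ _),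
      ENNReal.toReal_add (measure_ne_top _ _) (measure_ne_top _ _)] at this
    have := hF1 0; have := hF1 1; have := hF2 0; have := hF2 1
    linarith [hF1 0, hF1 1, hF2 0, hF2 1,
      ENNReal.toReal_mono (ENNReal.add_ne_top.mpr ⟨hne1, hne2⟩) hle]
  -- counting identity
  have count : ∀ (ω : Ω) (i : Fin 2) (c : ℝ),
      ((((Finset.univ.filter (fun j => z j = i)).filter
          (fun j => ‖(θ (z j) + w j ω) - θ i‖ ≤ c)).card : ℝ)
        = ((Finset.univ.filter (fun j => z j = i)).card : ℝ)
          - ∑ j ∈ Finset.univ.filter (fun j => z j = i),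
              (if c < ‖w j ω‖ then (1:ℝ) else 0)) := by
    intro ω i c
    have h1 : (Finset.univ.filter (fun j => z j = i)).filter
        (fun j => ‖(θ (z j) + w j ω) - θ i‖ ≤ c)
        = (Finset.univ.filter (fun j => z j = i)).filter (fun j => ‖w j ω‖ ≤ c) := by
      apply Finset.filter_congr
      intro j hj
      rw [(Finset.mem_filter.mp hj).2, add_sub_cancel_left]
    have h2 : ∑ j ∈ Finset.univ.filter (fun j => z j = i),
        (if c < ‖w j ω‖ then (1:ℝ) else 0)
        = ((((Finset.univ.filter (fun j => z j = i)).filter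
            (fun j => c < ‖w j ω‖)).card : ℝ)) := by
      rw [Finset.sum_boole]
    have heq : (Finset.univ.filter (fun j => z j = i)).filter (fun j => ¬ ‖w j ω‖ ≤ c)
        = (Finset.univ.filter (fun j => z j = i)).filter (fun j => c < ‖w j ω‖) := by
      apply Finset.filter_congr; intro j _; exact not_le
    have h3 := Finset.card_filter_add_card_filter_not
      (s := Finset.univ.filter (fun j => z j = i)) (p := fun j => ‖w j ω‖ ≤ c)
    rw [heq] at h3
    rw [h1, h2, ← h3]
    push_cast
    ring
  -- inclusion
  have hsub : Uᶜ ⊆ {ω | ∀ i : Fin 2,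
      (((Finset.univ.filter (fun j => z j = i)).card : ℝ) * (1 - β ^ 2)
        ≤ (((Finset.univ.filter (fun j => z j = i)).filter
            (fun j => ‖(θ (z j) + w j ω) - θ i‖ ≤ D₁)).card : ℝ)) ∧
      (((Finset.univ.filter (fun j => z j = i)).card : ℝ) * (1 - 5 / (4 * L))
        ≤ (((Finset.univ.filter (fun j => z j = i)).filter
            (fun j => ‖(θ (z j) + w j ω) - θ i‖ ≤ Δ / 32)).card : ℝ))} := by
    intro ω hω
    simp only [hUdef, Set.mem_compl_iff, Set.mem_union, not_or] at hω
    obtain ⟨⟨h10, h20⟩, ⟨h11, h21⟩⟩ := hω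
    intro i
    have hA : ω ∉ F1 i ∧ ω ∉ F2 i := by
      fin_cases i
      · exact ⟨h10, h20⟩
      · exact ⟨h11, h21⟩
    constructor
    · have hne := hA.1
      simp only [hF1def, Set.mem_setOf_eq, not_le] at hne
      rw [count ω i D₁]
      nlinarith [hne]
    · have hne := hA.2
      simp only [hF2def, Set.mem_setOf_eq, not_le] at hne
      rw [count ω i (Δ / 32)]
      nlinarith [hne]
  calc 1 - 4 * Real.exp (-(m : ℝ) / 4) ≤ 1 - (ℙ U).toReal := by linarith
    _ = (ℙ Uᶜ).toReal := by
        rw [prob_compl_eq_one_sub hUmeas,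
          ENNReal.toReal_sub_of_le prob_le_one ENNReal.one_ne_top, ENNReal.toReal_one]
    _ ≤ _ := ENNReal.toReal_mono (measure_ne_top _ _) (measure_mono hsub)
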